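/- Fix an integer k ≥ 2. There exists a constant C = C(k) such that for all real H ≥ 1, the sum of 1/m over all k-full integers m with m > H satisfies Σ_{m k-full, m > H} 1/m ≤ C · H^{1/k − 1}. -/

import Mathlib

open Finset

def IsKFull (k m : ℕ) : Prop := ∀ p : ℕ, p.Prime → p ∣ m → p ^ k ∣ m

namespace KFullAux

open scoped ENNReal NNReal

@[reducible] def T : ℕ → Type
  | 0 => ℕ
  | n+1 => ℕ × T n

instance instDecEqT : (n : ℕ) → DecidableEq (T n)
  | 0 => instDecidableEqNat
  | n+1 => @instDecidableEqProd _ _ instDecidableEqNat (instDecEqT n)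

def V (k : ℕ) : (n : ℕ) → T n → ℕ
  | 0, A => A ^ k
  | n+1, bt => bt.1 ^ (k + n + 1) * V k n bt.2

def oneT : (n : ℕ) → T n
  | 0 => 1
  | n+1 => (1, oneT n)

def mulA : (n : ℕ) → ℕ → T n → T n
  | 0, c, A => c * A
  | n+1, c, bt => (bt.1, mulA n c bt.2)

def mulB : (n : ℕ) → ℕ → ℕ → T n → T n
  | 0, _, _, A => A
  | n+1, i, c, bt => if i = n + 1 then (c * bt.1, bt.2) else (bt.1, mulB n i c bt.2)

lemma V_oneT (k : ℕ) : ∀ n, V k n (oneT n) = 1 := by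
  intro n
  induction n with
  | zero => simp [V, oneT]
  | succ n ih => simp [V, oneT, ih]

lemma V_mulA (k : ℕ) : ∀ n (c : ℕ) (t : T n), V k n (mulA n c t) = c ^ k * V k n t := by
  intro n
  induction n with
  | zero => intro c t; simp [V, mulA, mul_pow]
  | succ n ih => intro c t; simp [V, mulA, ih]; ring

lemma V_mulB (k : ℕ) : ∀ n (i : ℕ), 1 ≤ i → i ≤ n → ∀ (c : ℕ) (t : T n),
    V k n (mulB n i c t) = c ^ (k + i) * V k n t := by
  intro n
  induction n with
  | zero => intro i h1 h2; omega
  | succ n ih =>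
    intro i h1 h2 c t
    by_cases hi : i = n + 1
    · subst hi
      simp [V, mulB, mul_pow]
      ring
    · have h2' : i ≤ n := by omega
      simp [V, mulB, hi, ih i h1 h2']
      ring

lemma V_eq_one (k : ℕ) (hk : 1 ≤ k) : ∀ n (t : T n), V k n t = 1 → t = oneT n := by
  intro n
  induction n with
  | zero =>
    intro t ht
    have hk0 : k ≠ 0 := by omega
    have : t = 1 := (pow_eq_one_iff.mp ht).resolve_right hk0
    simpa [oneT]
  | succ n ih =>
    intro t ht
    simp only [V] at ht
    have h1 : t.1 ^ (k + n + 1) = 1 := Nat.eq_one_of_mul_eq_one_right ht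
    have h2 : V k n t.2 = 1 := Nat.eq_one_of_mul_eq_one_left ht
    have hb : t.1 = 1 := (pow_eq_one_iff.mp h1).resolve_right (by omega : k + n + 1 ≠ 0)
    have := ih t.2 h2
    simp [oneT, ← this, ← hb]

lemma decomp (k : ℕ) (hk : 2 ≤ k) :
    ∀ m : ℕ, 0 < m → IsKFull k m → ∃ t : T (k-1), V k (k-1) t = m := by
  intro m
  induction m using Nat.strong_induction_on with
  | _ m ih =>
    intro hm hfull
    rcases eq_or_lt_of_le (show 1 ≤ m from hm) with h1 | h1
    · exact ⟨oneT (k-1), by rw [V_oneT]; omega⟩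
    · have hm1 : m ≠ 1 := by omega
      have hprime : (m.minFac).Prime := Nat.minFac_prime hm1
      set p := m.minFac with hp
      have hpdvd : p ∣ m := Nat.minFac_dvd m
      set e := m.factorization p with he
      have hek : k ≤ e :=
        (Nat.Prime.pow_dvd_iff_le_factorization hprime (by omega)).mp (hfull p hprime hpdvd)
      set m' := m / p ^ e with hm'
      have hsplit : p ^ e * m' = m := Nat.ordProj_mul_ordCompl_eq_self m p
      have hm'pos : 0 < m' := Nat.ordCompl_pos p (by omega)
      have hpe1 : 1 < p ^ e := by
        have : 2 ≤ p := hprime.two_le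
        calc 1 < 2 ^ 1 := by norm_num
        _ ≤ p ^ e := Nat.pow_le_pow_left this 1 |>.trans (Nat.pow_le_pow_right (by omega) (by omega))
      have hm'lt : m' < m := by
        nlinarith [hm'pos]
      have hpndvd : ¬ p ∣ m' := Nat.not_dvd_ordCompl hprime (by omega)
      have hfull' : IsKFull k m' := by
        intro q hq hqm'
        have hqm : q ∣ m := hqm'.trans (Nat.ordCompl_dvd m p)
        have hqk : q ^ k ∣ m := hfull q hq hqm
        have hqp : q ≠ p := by
          rintro rfl
          exact hpndvd hqm'
        have hcop : Nat.Coprime (q ^ k) (p ^ e) :=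
          (((Nat.coprime_primes hq hprime).mpr hqp).pow k e)
        refine hcop.dvd_of_dvd_mul_left ?_
        rwa [hsplit]
      obtain ⟨t', ht'⟩ := ih m' hm'lt hm'pos hfull'
      set r := e % k with hr
      set q0 := e / k with hq0
      have hq01 : 1 ≤ q0 := Nat.one_le_div_iff (by omega) |>.mpr hek
      have heq : k * q0 + r = e := Nat.div_add_mod e k
      by_cases hr0 : r = 0
      · refine ⟨mulA (k-1) (p ^ q0) t', ?_⟩
        have he2 : q0 * k = e := by rw [← heq, hr0, mul_comm, Nat.add_zero]
        rw [V_mulA, ht', ← pow_mul, he2]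
        exact hsplit
      · have hrk : r < k := Nat.mod_lt e (by omega)
        refine ⟨mulA (k-1) (p ^ (q0 - 1)) (mulB (k-1) r p t'), ?_⟩
        have hexp : (q0 - 1) * k + (k + r) = e := by
          calc (q0 - 1) * k + (k + r) = ((q0 - 1) + 1) * k + r := by ring
          _ = q0 * k + r := by rw [Nat.sub_add_cancel hq01]
          _ = e := by rw [← heq]; ring
        rw [V_mulA, V_mulB k (k-1) r (by omega) (by omega), ht', ← pow_mul, ← mul_assoc,
          ← pow_add, hexp]
        exact hsplit


lemma tsum_tail_sq (N : ℕ) (hN : 1 ≤ N) :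
    ∑' b : ℕ, (if N < b then ((b : ℝ≥0∞) ^ 2)⁻¹ else 0) ≤ ((N : ℝ≥0∞))⁻¹ := by
  rw [ENNReal.tsum_eq_iSup_sum]
  refine iSup_le fun s => ?_
  set M := max N (s.sup id) with hM
  have hsub : s.filter (fun i => N < i) ⊆ Finset.Ioc N M := by
    intro i hi
    simp only [Finset.mem_filter] at hi
    refine Finset.mem_Ioc.mpr ⟨hi.2, le_trans (Finset.le_sup (f := id) hi.1) (le_max_right _ _)⟩
  calc ∑ b ∈ s, (if N < b then ((b : ℝ≥0∞) ^ 2)⁻¹ else 0)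
      = ∑ b ∈ s.filter (fun i => N < i), ((b : ℝ≥0∞) ^ 2)⁻¹ := (Finset.sum_filter _ _).symm
    _ ≤ ∑ b ∈ Finset.Ioc N M, ((b : ℝ≥0∞) ^ 2)⁻¹ := Finset.sum_le_sum_of_subset hsub
    _ = ∑ b ∈ Finset.Ioc N M, ENNReal.ofReal (((b : ℝ) ^ 2)⁻¹) := by
        refine Finset.sum_congr rfl fun b hb => ?_
        have hb1 : 0 < b := lt_of_le_of_lt (Nat.zero_le N) (Finset.mem_Ioc.mp hb).1
        have hbR : (0:ℝ) < (b:ℝ)^2 := by positivity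
        rw [ENNReal.ofReal_inv_of_pos hbR]
        congr 1
        rw [ENNReal.ofReal_pow (by positivity), ENNReal.ofReal_natCast]
    _ = ENNReal.ofReal (∑ b ∈ Finset.Ioc N M, ((b : ℝ) ^ 2)⁻¹) := by
        rw [ENNReal.ofReal_sum_of_nonneg]
        intro b _
        positivity
    _ ≤ ENNReal.ofReal ((N : ℝ)⁻¹) := by
        refine ENNReal.ofReal_le_ofReal ?_
        have := sum_Ioc_inv_sq_le_sub (α := ℝ) (k := N) (n := M) (by omega) (le_max_left _ _)
        have hM0 : (0:ℝ) ≤ (M:ℝ)⁻¹ := by positivity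
        calc ∑ b ∈ Finset.Ioc N M, ((b : ℝ) ^ 2)⁻¹ ≤ (N:ℝ)⁻¹ - (M:ℝ)⁻¹ := this
          _ ≤ (N:ℝ)⁻¹ := by linarith
    _ ≤ ((N : ℝ≥0∞))⁻¹ := by
        rw [ENNReal.ofReal_inv_of_pos (by positivity), ENNReal.ofReal_natCast]

lemma ptail_pow (j N : ℕ) (hj : 2 ≤ j) (hN : 1 ≤ N) :
    ∑' b : ℕ, (if N < b then ((b : ℝ≥0∞) ^ j)⁻¹ else 0) ≤ ((N : ℝ≥0∞) ^ (j-1))⁻¹ := by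
  have key : ∀ b : ℕ, (if N < b then ((b : ℝ≥0∞) ^ j)⁻¹ else 0)
      ≤ ((N : ℝ≥0∞) ^ (j-2))⁻¹ * (if N < b then ((b : ℝ≥0∞) ^ 2)⁻¹ else 0) := by
    intro b
    by_cases hb : N < b
    · simp only [hb, if_true]
      have h1 : (N : ℝ≥0∞) ^ (j-2) * (b : ℝ≥0∞) ^ 2 ≤ (b : ℝ≥0∞) ^ j := by
        have hNb : (N : ℝ≥0∞) ≤ (b : ℝ≥0∞) := by exact_mod_cast hb.le
        calc (N : ℝ≥0∞) ^ (j-2) * (b : ℝ≥0∞) ^ 2 ≤ (b : ℝ≥0∞) ^ (j-2) * (b : ℝ≥0∞) ^ 2 :=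
              mul_le_mul_left (pow_le_pow_left' hNb (j-2)) _
          _ = (b : ℝ≥0∞) ^ j := by rw [← pow_add]; congr 1; omega
      have hN0 : (N : ℝ≥0∞) ≠ 0 := Nat.cast_ne_zero.mpr (by omega)
      calc ((b : ℝ≥0∞) ^ j)⁻¹ ≤ ((N : ℝ≥0∞) ^ (j-2) * (b : ℝ≥0∞) ^ 2)⁻¹ :=
            ENNReal.inv_le_inv' h1
        _ = ((N : ℝ≥0∞) ^ (j-2))⁻¹ * ((b : ℝ≥0∞) ^ 2)⁻¹ :=
            ENNReal.mul_inv (Or.inl (pow_ne_zero _ hN0))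
              (Or.inl (ENNReal.pow_ne_top (ENNReal.natCast_ne_top N)))
    · simp [hb]
  calc ∑' b : ℕ, (if N < b then ((b : ℝ≥0∞) ^ j)⁻¹ else 0)
      ≤ ∑' b : ℕ, ((N : ℝ≥0∞) ^ (j-2))⁻¹ * (if N < b then ((b : ℝ≥0∞) ^ 2)⁻¹ else 0) :=
        ENNReal.tsum_le_tsum key
    _ = ((N : ℝ≥0∞) ^ (j-2))⁻¹ * ∑' b : ℕ, (if N < b then ((b : ℝ≥0∞) ^ 2)⁻¹ else 0) :=
        ENNReal.tsum_mul_left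
    _ ≤ ((N : ℝ≥0∞) ^ (j-2))⁻¹ * ((N : ℝ≥0∞))⁻¹ := by
        gcongr
        exact tsum_tail_sq N hN
    _ = ((N : ℝ≥0∞) ^ (j-1))⁻¹ := by
        have hN0 : (N : ℝ≥0∞) ≠ 0 := Nat.cast_ne_zero.mpr (by omega)
        rw [← ENNReal.mul_inv (Or.inl (pow_ne_zero _ hN0))
          (Or.inl (ENNReal.pow_ne_top (ENNReal.natCast_ne_top N)))]
        congr 1
        rw [← pow_succ]
        congr 1
        omega

lemma ptail (j : ℕ) (hj : 2 ≤ j) (H : ℝ) (hH : 1 ≤ H) :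
    ∑' b : ℕ, (if H < ((b:ℝ)) ^ j then ((b : ℝ≥0∞) ^ j)⁻¹ else 0)
      ≤ ENNReal.ofReal ((2:ℝ) ^ j * H ^ ((1:ℝ)/(j:ℝ) - 1)) := by
  have hH0 : (0:ℝ) < H := lt_of_lt_of_le one_pos hH
  have hj0 : (0:ℝ) < (j:ℝ) := by exact_mod_cast (by omega : 0 < j)
  set x := H ^ ((1:ℝ)/(j:ℝ)) with hx
  have hx1 : 1 ≤ x := by
    have := Real.rpow_le_rpow (by norm_num) hH (by positivity : (0:ℝ) ≤ (1:ℝ)/(j:ℝ))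
    rw [hx, one_div]
    simpa [Real.one_rpow] using this
  have hx0 : (0:ℝ) < x := lt_of_lt_of_le one_pos hx1
  have hxj : x ^ j = H := by
    rw [hx, ← Real.rpow_natCast (H ^ ((1:ℝ)/(j:ℝ))) j, ← Real.rpow_mul hH0.le]
    rw [one_div, inv_mul_cancel₀ (ne_of_gt hj0), Real.rpow_one]
  set N := ⌊x⌋₊ with hN
  have hN1 : 1 ≤ N := Nat.le_floor (by exact_mod_cast hx1)
  have hterm : ∀ b : ℕ, (if H < ((b:ℝ)) ^ j then ((b : ℝ≥0∞) ^ j)⁻¹ else 0)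
      ≤ (if N < b then ((b : ℝ≥0∞) ^ j)⁻¹ else 0) := by
    intro b
    by_cases h : H < ((b:ℝ)) ^ j
    · have hb : N < b := by
        by_contra hc
        push_neg at hc
        have h1 : (b : ℝ) ≤ x := le_trans (by exact_mod_cast hc) (Nat.floor_le hx0.le)
        have h2 : ((b:ℝ)) ^ j ≤ x ^ j := pow_le_pow_left₀ (by positivity) h1 j
        rw [hxj] at h2
        linarith
      simp [h, hb]
    · simp [h]
  have h2 : x / 2 ≤ (N : ℝ) := by
    have hb1 : (1:ℝ) ≤ (N:ℝ) := by exact_mod_cast hN1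
    linarith [Nat.lt_floor_add_one x]
  have key : (((N:ℝ)) ^ (j-1))⁻¹ ≤ (2:ℝ) ^ j * H ^ ((1:ℝ)/(j:ℝ) - 1) := by
    have e1 : (0:ℝ) < x/2 := by linarith
    have e2 : (x/2) ^ (j-1) ≤ ((N:ℝ)) ^ (j-1) := pow_le_pow_left₀ e1.le h2 _
    have e3 : (((N:ℝ)) ^ (j-1))⁻¹ ≤ ((x/2) ^ (j-1))⁻¹ := by
      apply inv_anti₀ (by positivity) e2
    have e5 : (x ^ (j-1 : ℕ))⁻¹ = H ^ ((1:ℝ)/(j:ℝ) - 1) := by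
      rw [← Real.rpow_natCast x (j-1), ← Real.rpow_neg hx0.le, hx, ← Real.rpow_mul hH0.le]
      congr 1
      have hc : ((j-1:ℕ):ℝ) = (j:ℝ) - 1 := by
        push_cast [Nat.cast_sub (by omega : 1 ≤ j)]
        ring
      rw [hc]
      field_simp
      ring
    calc (((N:ℝ)) ^ (j-1))⁻¹ ≤ ((x/2) ^ (j-1))⁻¹ := e3
      _ = (2:ℝ) ^ (j-1) * (x ^ (j-1 : ℕ))⁻¹ := by
          rw [div_pow, inv_div, div_eq_mul_inv]
      _ = (2:ℝ) ^ (j-1) * H ^ ((1:ℝ)/(j:ℝ) - 1) := by rw [e5]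
      _ ≤ (2:ℝ) ^ j * H ^ ((1:ℝ)/(j:ℝ) - 1) := by
          have : (0:ℝ) ≤ H ^ ((1:ℝ)/(j:ℝ) - 1) := Real.rpow_nonneg hH0.le _
          have h2j : (2:ℝ) ^ (j-1) ≤ (2:ℝ) ^ j := pow_le_pow_right₀ (by norm_num) (by omega)
          nlinarith
  calc ∑' b : ℕ, (if H < ((b:ℝ)) ^ j then ((b : ℝ≥0∞) ^ j)⁻¹ else 0)
      ≤ ∑' b : ℕ, (if N < b then ((b : ℝ≥0∞) ^ j)⁻¹ else 0) := ENNReal.tsum_le_tsum hterm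
    _ ≤ ((N : ℝ≥0∞) ^ (j-1))⁻¹ := ptail_pow j N hj hN1
    _ = ENNReal.ofReal ((((N:ℝ)) ^ (j-1))⁻¹) := by
        rw [ENNReal.ofReal_inv_of_pos (by positivity), ENNReal.ofReal_pow (by positivity),
          ENNReal.ofReal_natCast]
    _ ≤ ENNReal.ofReal ((2:ℝ) ^ j * H ^ ((1:ℝ)/(j:ℝ) - 1)) := ENNReal.ofReal_le_ofReal key

lemma rsum (p : ℝ) (hp : 1 < p) : ∃ D : ℝ≥0∞, D ≠ ⊤ ∧ ∀ s : ℝ, p ≤ s →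
    ∑' b : ℕ, ENNReal.ofReal ((b:ℝ) ^ (-s)) ≤ D := by
  have hsum : Summable (fun b : ℕ => (b:ℝ) ^ (-p)) := by
    rw [Real.summable_nat_rpow]
    linarith
  refine ⟨ENNReal.ofReal (∑' b : ℕ, (b:ℝ) ^ (-p)), ENNReal.ofReal_ne_top, fun s hs => ?_⟩
  have hterm : ∀ b : ℕ, ENNReal.ofReal ((b:ℝ) ^ (-s)) ≤ ENNReal.ofReal ((b:ℝ) ^ (-p)) := by
    intro b
    apply ENNReal.ofReal_le_ofReal
    rcases Nat.eq_zero_or_pos b with hb | hb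
    · subst hb
      simp only [Nat.cast_zero]
      rw [Real.zero_rpow (by linarith), Real.zero_rpow (by linarith)]
    · rcases eq_or_lt_of_le (Nat.one_le_cast.mpr hb : (1:ℝ) ≤ (b:ℝ)) with hb1 | hb1
      · rw [← hb1]
        simp
      · exact Real.rpow_le_rpow_of_exponent_le hb1.le (by linarith)
  calc ∑' b : ℕ, ENNReal.ofReal ((b:ℝ) ^ (-s))
      ≤ ∑' b : ℕ, ENNReal.ofReal ((b:ℝ) ^ (-p)) := ENNReal.tsum_le_tsum hterm
    _ = ENNReal.ofReal (∑' b : ℕ, (b:ℝ) ^ (-p)) :=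
        (ENNReal.ofReal_tsum_of_nonneg (fun b => Real.rpow_nonneg (Nat.cast_nonneg b) _) hsum).symm

lemma main (k : ℕ) (hk : 2 ≤ k) (n : ℕ) :
    ∃ C : ℝ≥0∞, C ≠ ⊤ ∧ ∀ H : ℝ, 1 ≤ H →
      ∑' t : T n, (if H < ((V k n t : ℕ) : ℝ) then ((V k n t : ℕ) : ℝ≥0∞)⁻¹ else 0)
        ≤ C * ENNReal.ofReal (H ^ ((1:ℝ)/(k:ℝ) - 1)) := by
  have hk0R : (0:ℝ) < (k:ℝ) := by exact_mod_cast (by omega : 0 < k)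
  induction n with
  | zero =>
    refine ⟨ENNReal.ofReal ((2:ℝ)^k), ENNReal.ofReal_ne_top, fun H hH => ?_⟩
    have hre : ∀ A : ℕ, (if H < ((V k 0 A : ℕ) : ℝ) then ((V k 0 A : ℕ) : ℝ≥0∞)⁻¹ else 0)
        = (if H < ((A:ℝ))^k then ((A : ℝ≥0∞)^k)⁻¹ else 0) := by
      intro A
      have h1 : ((V k 0 A : ℕ) : ℝ) = (A:ℝ)^k := by simp [V]
      have h2 : ((V k 0 A : ℕ) : ℝ≥0∞) = (A:ℝ≥0∞)^k := by simp [V]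
      rw [h1, h2]
    rw [tsum_congr hre]
    calc ∑' A : ℕ, (if H < ((A:ℝ))^k then ((A : ℝ≥0∞)^k)⁻¹ else 0)
        ≤ ENNReal.ofReal ((2:ℝ) ^ k * H ^ ((1:ℝ)/(k:ℝ) - 1)) := ptail k hk H hH
      _ = ENNReal.ofReal ((2:ℝ)^k) * ENNReal.ofReal (H ^ ((1:ℝ)/(k:ℝ) - 1)) :=
          ENNReal.ofReal_mul (by positivity)
  | succ n ih =>
    obtain ⟨C, hC, hmain⟩ := ih
    set j := k + n + 1 with hjdef
    have hj2 : 2 ≤ j := by omega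
    have hjk : k < j := by omega
    have hjR : (0:ℝ) < (j:ℝ) := by exact_mod_cast (by omega : 0 < j)
    obtain ⟨D, hD, hDle⟩ := rsum (1 + 1/(k:ℝ)) (by
      have : (0:ℝ) < 1/(k:ℝ) := by positivity
      linarith)
    refine ⟨C * D + (1 + C) * ENNReal.ofReal ((2:ℝ)^j), ?_, fun H hH => ?_⟩
    · exact ENNReal.add_ne_top.mpr ⟨ENNReal.mul_ne_top hC hD,
        ENNReal.mul_ne_top (ENNReal.add_ne_top.mpr ⟨ENNReal.one_ne_top, hC⟩) ENNReal.ofReal_ne_top⟩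
    have hH0 : (0:ℝ) < H := lt_of_lt_of_le one_pos hH
    have hVs : ∀ (b:ℕ) (t : T n), V k (n+1) (b, t) = b ^ j * V k n t := fun b t => rfl
    -- the big termwise bound over b
    have inner_le : ∀ b : ℕ,
        (∑' t : T n, (if H < ((V k (n+1) (b, t) : ℕ) : ℝ)
            then ((V k (n+1) (b, t) : ℕ) : ℝ≥0∞)⁻¹ else 0))
        ≤ (if H < ((b:ℝ))^j then (1 + C) * (((b:ℝ≥0∞))^j)⁻¹ else 0)
          + C * ENNReal.ofReal (H ^ ((1:ℝ)/(k:ℝ) - 1))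
              * ENNReal.ofReal ((b:ℝ) ^ (-((j:ℝ)/(k:ℝ)))) := by
      intro b
      rcases Nat.eq_zero_or_pos b with hb0 | hb0
      · subst hb0
        have : ∀ t : T n, (if H < ((V k (n+1) ((0:ℕ), t) : ℕ) : ℝ)
            then ((V k (n+1) ((0:ℕ), t) : ℕ) : ℝ≥0∞)⁻¹ else 0) = 0 := by
          intro t
          rw [hVs]
          have : (0:ℕ) ^ j = 0 := Nat.zero_pow (by omega)
          rw [this]
          simp [not_lt.mpr hH0.le]
        rw [tsum_congr this, tsum_zero]
        exact zero_le
      · have hbR : (0:ℝ) < (b:ℝ) := by exact_mod_cast hb0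
        have hbjR : (0:ℝ) < ((b:ℝ))^j := by positivity
        have hbE0 : ((b:ℝ≥0∞))^j ≠ 0 := pow_ne_zero _ (Nat.cast_ne_zero.mpr (by omega))
        have hbET : ((b:ℝ≥0∞))^j ≠ ⊤ := ENNReal.pow_ne_top (ENNReal.natCast_ne_top b)
        by_cases hbig : H < ((b:ℝ))^j
        · -- bound via total sum
          refine le_trans ?_ (le_add_right (le_of_eq (if_pos hbig).symm))
          have hterm : ∀ t : T n, (if H < ((V k (n+1) (b, t) : ℕ) : ℝ)
              then ((V k (n+1) (b, t) : ℕ) : ℝ≥0∞)⁻¹ else 0)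
              ≤ (((b:ℝ≥0∞))^j)⁻¹ * ((if V k n t = 1 then 1 else 0)
                + (if (1:ℝ) < ((V k n t : ℕ) : ℝ) then ((V k n t : ℕ) : ℝ≥0∞)⁻¹ else 0)) := by
            intro t
            rw [hVs]
            set W := V k n t with hW
            rcases Nat.lt_or_ge W 1 with hW0 | hW1
            · interval_cases W
              simp [not_lt.mpr hH0.le]
            · rcases eq_or_lt_of_le hW1 with hW1' | hW2
              · rw [← hW1']
                simp only [mul_one, Nat.cast_one, lt_self_iff_false, if_false, if_pos rfl,
                  add_zero, mul_one]
                push_cast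
                split <;> simp
              · -- W ≥ 2
                have hWR : (1:ℝ) < ((W:ℕ):ℝ) := by exact_mod_cast hW2
                have hWE0 : ((W:ℕ):ℝ≥0∞) ≠ 0 := Nat.cast_ne_zero.mpr (by omega)
                have hWET : ((W:ℕ):ℝ≥0∞) ≠ ⊤ := ENNReal.natCast_ne_top W
                have hsplitinv : ((b ^ j * W : ℕ) : ℝ≥0∞)⁻¹
                    = (((b:ℝ≥0∞))^j)⁻¹ * ((W:ℕ):ℝ≥0∞)⁻¹ := by
                  push_cast
                  exact ENNReal.mul_inv (Or.inl hbE0) (Or.inl hbET)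
                have hne : W ≠ 1 := by omega
                simp only [hne, if_neg, if_false, hWR, if_pos, zero_add]
                split
                · rw [hsplitinv]
                · exact zero_le
          refine (ENNReal.tsum_le_tsum hterm).trans ?_
          rw [ENNReal.tsum_mul_left]
          rw [mul_comm (1 + C)]
          refine mul_le_mul_right ?_ _
          rw [ENNReal.tsum_add]
          have e1 : ∑' t : T n, (if V k n t = 1 then (1:ℝ≥0∞) else 0) = 1 := by
            have : ∀ t : T n, (if V k n t = 1 then (1:ℝ≥0∞) else 0)
                = (if t = oneT n then (1:ℝ≥0∞) else 0) := by
              intro t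
              refine if_congr ⟨fun h => V_eq_one k (by omega) n t h, fun h => ?_⟩ rfl rfl
              rw [h, V_oneT]
            rw [tsum_congr this, tsum_ite_eq]
          have e2 : ∑' t : T n, (if (1:ℝ) < ((V k n t : ℕ) : ℝ)
              then ((V k n t : ℕ) : ℝ≥0∞)⁻¹ else 0) ≤ C := by
            have := hmain 1 le_rfl
            simpa [Real.one_rpow] using this
          exact add_le_add (le_of_eq e1) e2
        · -- small b : use induction hypothesis at H / b^j
          rw [if_neg hbig]
          set H' := H / ((b:ℝ))^j with hH'def
          have hH'1 : 1 ≤ H' := (le_div_iff₀ hbjR).mpr (by simpa using not_lt.mp hbig)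
          have hterm : ∀ t : T n, (if H < ((V k (n+1) (b, t) : ℕ) : ℝ)
              then ((V k (n+1) (b, t) : ℕ) : ℝ≥0∞)⁻¹ else 0)
              = (((b:ℝ≥0∞))^j)⁻¹ * (if H' < ((V k n t : ℕ) : ℝ)
                  then ((V k n t : ℕ) : ℝ≥0∞)⁻¹ else 0) := by
            intro t
            rw [hVs]
            set W := V k n t with hW
            have hcond : (H < ((b ^ j * W : ℕ) : ℝ)) ↔ (H' < ((W:ℕ):ℝ)) := by
              rw [hH'def, div_lt_iff₀ hbjR]
              push_cast
              constructor <;> intro h <;> nlinarith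
            by_cases h : H' < ((W:ℕ):ℝ)
            · have hWR : (1:ℝ) ≤ ((W:ℕ):ℝ) := by
                by_contra hc
                push_neg at hc
                have : ((W:ℕ):ℝ) ≥ 0 := Nat.cast_nonneg W
                nlinarith
              have hW1 : 1 ≤ W := by exact_mod_cast hWR
              rw [if_pos (hcond.mpr h), if_pos h]
              push_cast
              exact ENNReal.mul_inv (Or.inl hbE0) (Or.inl hbET)
            · rw [if_neg (fun hc => h (hcond.mp hc)), if_neg h, mul_zero]
          rw [tsum_congr hterm, ENNReal.tsum_mul_left, zero_add]
          have hIH := hmain H' hH'1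
          refine le_trans (mul_le_mul_right hIH _) (le_of_eq ?_)
          have hbinv : (((b:ℝ≥0∞))^j)⁻¹ = ENNReal.ofReal ((((b:ℝ))^j)⁻¹) := by
            rw [ENNReal.ofReal_inv_of_pos hbjR, ENNReal.ofReal_pow (by positivity),
              ENNReal.ofReal_natCast]
          rw [hbinv, ← mul_assoc, mul_comm (ENNReal.ofReal ((((b:ℝ))^j)⁻¹)) C, mul_assoc,
            mul_assoc]
          congr 1
          rw [← ENNReal.ofReal_mul (by positivity), ← ENNReal.ofReal_mul (by positivity)]
          congr 1
          have hBrw : ((b:ℝ))^j = (b:ℝ) ^ ((j:ℕ):ℝ) := (Real.rpow_natCast _ _).symm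
          rw [hH'def, Real.div_rpow hH0.le (by positivity)]
          rw [div_eq_mul_inv, ← mul_assoc, mul_comm ((((b:ℝ))^j)⁻¹), mul_assoc]
          congr 1
          rw [← Real.rpow_neg (by positivity), ← Real.rpow_neg_one (((b:ℝ))^j), hBrw,
            ← Real.rpow_mul hbR.le, ← Real.rpow_mul hbR.le, ← Real.rpow_add hbR]
          congr 1
          field_simp
          ring
    have hprod : (∑' t : T (n+1), (if H < ((V k (n+1) t : ℕ) : ℝ)
          then ((V k (n+1) t : ℕ) : ℝ≥0∞)⁻¹ else 0))
        = ∑' (b : ℕ), ∑' (t : T n), (if H < ((V k (n+1) (b, t) : ℕ) : ℝ)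
            then ((V k (n+1) (b, t) : ℕ) : ℝ≥0∞)⁻¹ else 0) :=
      ENNReal.tsum_prod (f := fun (b : ℕ) (t : T n) => if H < ((V k (n+1) (b, t) : ℕ) : ℝ)
        then ((V k (n+1) (b, t) : ℕ) : ℝ≥0∞)⁻¹ else 0)
    rw [hprod]
    refine le_trans (ENNReal.tsum_le_tsum inner_le) ?_
    rw [ENNReal.tsum_add]
    have part1 : ∑' b : ℕ, (if H < ((b:ℝ))^j then (1 + C) * (((b:ℝ≥0∞))^j)⁻¹ else 0)
        ≤ (1 + C) * (ENNReal.ofReal ((2:ℝ)^j) * ENNReal.ofReal (H ^ ((1:ℝ)/(k:ℝ) - 1))) := by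
      have he : ∀ b : ℕ, (if H < ((b:ℝ))^j then (1 + C) * (((b:ℝ≥0∞))^j)⁻¹ else 0)
          = (1 + C) * (if H < ((b:ℝ))^j then (((b:ℝ≥0∞))^j)⁻¹ else 0) := by
        intro b; split <;> simp
      rw [tsum_congr he, ENNReal.tsum_mul_left]
      refine mul_le_mul_right ?_ _
      refine le_trans (ptail j hj2 H hH) ?_
      rw [ENNReal.ofReal_mul (by positivity)]
      refine mul_le_mul_right (ENNReal.ofReal_le_ofReal ?_) _
      refine Real.rpow_le_rpow_of_exponent_le hH ?_
      have h1j : (1:ℝ)/(j:ℝ) ≤ 1/(k:ℝ) := by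
        apply one_div_le_one_div_of_le hk0R
        exact_mod_cast le_of_lt hjk
      linarith
    have part2 : ∑' b : ℕ, (C * ENNReal.ofReal (H ^ ((1:ℝ)/(k:ℝ) - 1))
          * ENNReal.ofReal ((b:ℝ) ^ (-((j:ℝ)/(k:ℝ)))))
        ≤ C * ENNReal.ofReal (H ^ ((1:ℝ)/(k:ℝ) - 1)) * D := by
      rw [ENNReal.tsum_mul_left]
      refine mul_le_mul_right ?_ _
      refine hDle _ ?_
      rw [le_div_iff₀ hk0R]
      have h1 : (1/(k:ℝ))*(k:ℝ) = 1 := by field_simp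
      have h2 : (k:ℝ) + 1 ≤ (j:ℝ) := by exact_mod_cast hjk
      nlinarith
    refine le_trans (add_le_add part1 part2) (le_of_eq ?_)
    ring

end KFullAux

open scoped ENNReal NNReal in
/-- For a fixed integer `k ≥ 2` there is a constant `C = C(k)`
such that for all real `H ≥ 1`, `Σ_{m k-full, m > H} 1/m ≤ C · H^{1/k - 1}`. -/
theorem kfull_tail_sum_bound (k : ℕ) (hk : 2 ≤ k) :
    ∃ C : ℝ, ∀ H : ℝ, 1 ≤ H →
      (∑' m : {m : ℕ // IsKFull k m ∧ H < (m : ℝ)}, (1 : ℝ) / ((m : ℕ) : ℝ))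
        ≤ C * H ^ ((1 : ℝ) / (k : ℝ) - 1) := by
  obtain ⟨C, hC, hmain⟩ := KFullAux.main k hk (k-1)
  refine ⟨C.toReal, fun H hH => ?_⟩
  have hH0 : (0:ℝ) < H := lt_of_lt_of_le one_pos hH
  set n := k - 1 with hn
  have hchoice : ∀ m : {m : ℕ // IsKFull k m ∧ H < (m : ℝ)},
      ∃ t : KFullAux.T n, KFullAux.V k n t = (m:ℕ) := by
    rintro ⟨m, hfull, hm⟩
    have hm0 : 0 < m := by
      have : (0:ℝ) < (m:ℝ) := lt_trans hH0 hm
      exact_mod_cast this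
    exact KFullAux.decomp k hk m hm0 hfull
  choose ι hι using hchoice
  have hinj : Function.Injective ι := by
    intro a b hab
    apply Subtype.ext
    rw [← hι a, ← hι b, hab]
  have hgι : ∀ m : {m : ℕ // IsKFull k m ∧ H < (m : ℝ)},
      (if H < ((KFullAux.V k n (ι m) : ℕ) : ℝ) then ((KFullAux.V k n (ι m) : ℕ) : ℝ≥0∞)⁻¹ else 0)
        = (((m : ℕ) : ℝ≥0∞))⁻¹ := by
    intro m
    rw [hι m, if_pos m.2.2]
  have hEN : (∑' m : {m : ℕ // IsKFull k m ∧ H < (m : ℝ)}, (((m : ℕ) : ℝ≥0∞))⁻¹)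
      ≤ C * ENNReal.ofReal (H ^ ((1:ℝ)/(k:ℝ) - 1)) := by
    calc (∑' m : {m : ℕ // IsKFull k m ∧ H < (m : ℝ)}, (((m : ℕ) : ℝ≥0∞))⁻¹)
        = ∑' m : {m : ℕ // IsKFull k m ∧ H < (m : ℝ)},
            (if H < ((KFullAux.V k n (ι m) : ℕ) : ℝ)
              then ((KFullAux.V k n (ι m) : ℕ) : ℝ≥0∞)⁻¹ else 0) := (tsum_congr hgι).symm
      _ ≤ ∑' t : KFullAux.T n, (if H < ((KFullAux.V k n t : ℕ) : ℝ)
              then ((KFullAux.V k n t : ℕ) : ℝ≥0∞)⁻¹ else 0) :=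
          ENNReal.tsum_comp_le_tsum_of_injective hinj _
      _ ≤ C * ENNReal.ofReal (H ^ ((1:ℝ)/(k:ℝ) - 1)) := hmain H hH
  have hne : C * ENNReal.ofReal (H ^ ((1:ℝ)/(k:ℝ) - 1)) ≠ ⊤ :=
    ENNReal.mul_ne_top hC ENNReal.ofReal_ne_top
  have hterm_ne : ∀ m : {m : ℕ // IsKFull k m ∧ H < (m : ℝ)},
      (((m : ℕ) : ℝ≥0∞))⁻¹ ≠ ⊤ := by
    intro m
    have hm0 : 0 < (m:ℕ) := by
      have : (0:ℝ) < ((m:ℕ):ℝ) := lt_trans hH0 m.2.2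
      exact_mod_cast this
    exact ENNReal.inv_ne_top.mpr (Nat.cast_ne_zero.mpr (by omega))
  have hreal : (∑' m : {m : ℕ // IsKFull k m ∧ H < (m : ℝ)}, (1 : ℝ) / ((m : ℕ) : ℝ))
      = (∑' m : {m : ℕ // IsKFull k m ∧ H < (m : ℝ)}, (((m : ℕ) : ℝ≥0∞))⁻¹).toReal := by
    rw [ENNReal.tsum_toReal_eq hterm_ne]
    refine tsum_congr fun m => ?_
    rw [ENNReal.toReal_inv, one_div]
    norm_num
  rw [hreal]
  calc (∑' m : {m : ℕ // IsKFull k m ∧ H < (m : ℝ)}, (((m : ℕ) : ℝ≥0∞))⁻¹).toReal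
      ≤ (C * ENNReal.ofReal (H ^ ((1:ℝ)/(k:ℝ) - 1))).toReal := ENNReal.toReal_mono hne hEN
    _ = C.toReal * H ^ ((1:ℝ)/(k:ℝ) - 1) := by
        rw [ENNReal.toReal_mul, ENNReal.toReal_ofReal (Real.rpow_nonneg hH0.le _)]
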